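/- Let q, α_0, α_1, α_2, α_3 be complex numbers with 0 < |q| < 1 and α_0·q^m ≠ 1 and α_0α_1α_2·q^m ≠ 1 for all integers m ≥ 0. Define the entire functions x_0(t) = ₂φ₂[α_0α_1, α_0α_1α_2α_3; α_0, α_0α_1α_2; q, qα_0t], x_1(t) = ((1−q)α_0/(1−α_0))·₂φ₂[α_0α_1, α_0α_1α_2α_3; qα_0, α_0α_1α_2; q, q²α_0t], x_2(t) = ((1−q)α_0(1−α_0α_1)/((1−α_0)(1−α_0α_1α_2)))·₂φ₂[qα_0α_1, α_0α_1α_2α_3; qα_0, qα_0α_1α_2; q, q²α_0t]. Then for every t ∈ ℂ the vector x(t) = (x_0(t), x_1(t), x_2(t))ᵀ satisfies x(q^{-1}t) = (A_0 + tA_1)·x(t), where A_0 = [[1, 0, 0], [(1−q)α_0, α_0, 0], [(1−q)α_0, α_0(1−α_1), α_0α_1α_2]] and A_1 = [[−α_0, −α_0(1−α_1)/(1−q), −α_0α_1α_2(1−α_3)/(1−q)], [0,0,0], [0,0,0]]. (This yields the particular solution, in terms of ₂φ₂, of the degenerate q-Garnier system attached to the quiver Q_11.) -/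

import Mathlib

noncomputable section

/-- The `q`-Pochhammer symbol `(a;q)_n = Π_{k=1}^{n} (1 - a q^{k-1})`. -/
def qPoch (q a : ℂ) (n : ℕ) : ℂ := ∏ k ∈ Finset.range n, (1 - a * q ^ k)

/-- The basic hypergeometric series `₂φ₂[a₁,a₂; b₁,b₂; q, t]`. -/
def phi22 (a1 a2 b1 b2 q t : ℂ) : ℂ :=
  ∑' n : ℕ, (qPoch q a1 n * qPoch q a2 n) /
    (qPoch q b1 n * qPoch q b2 n * qPoch q q n) *
    (-1) ^ n * q ^ (n * (n - 1) / 2) * t ^ n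

/-- `x₀(t)` of the hypergeometric solution attached to the quiver `Q_11`. -/
def W0 (q a0 a1 a2 a3 t : ℂ) : ℂ :=
  phi22 (a0 * a1) (a0 * a1 * a2 * a3) a0 (a0 * a1 * a2) q (q * a0 * t)

/-- `x₁(t)` of the hypergeometric solution attached to the quiver `Q_11`. -/
def W1 (q a0 a1 a2 a3 t : ℂ) : ℂ :=
  (1 - q) * a0 / (1 - a0) *
    phi22 (a0 * a1) (a0 * a1 * a2 * a3) (q * a0) (a0 * a1 * a2) q (q ^ 2 * a0 * t)

/-- `x₂(t)` of the hypergeometric solution attached to the quiver `Q_11`. -/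
def W2 (q a0 a1 a2 a3 t : ℂ) : ℂ :=
  (1 - q) * a0 * (1 - a0 * a1) / ((1 - a0) * (1 - a0 * a1 * a2)) *
    phi22 (q * a0 * a1) (a0 * a1 * a2 * a3) (q * a0) (q * a0 * a1 * a2) q (q ^ 2 * a0 * t)

def phiTerm (a1 a2 b1 b2 q t : ℂ) (n : ℕ) : ℂ :=
  (qPoch q a1 n * qPoch q a2 n) /
    (qPoch q b1 n * qPoch q b2 n * qPoch q q n) *
    (-1) ^ n * q ^ (n * (n - 1) / 2) * t ^ n

lemma phi22_eq (a1 a2 b1 b2 q t : ℂ) : phi22 a1 a2 b1 b2 q t = ∑' n, phiTerm a1 a2 b1 b2 q t n := rfl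

lemma tri (n : ℕ) : (n+1)*((n+1)-1)/2 = n*(n-1)/2 + n := by
  have h : (n+1)*n = n*(n-1) + n*2 := by cases n with
    | zero => rfl
    | succ m => simp [Nat.succ_sub_one]; ring
  simp only [Nat.add_sub_cancel]
  rw [h, Nat.add_mul_div_right _ _ (by norm_num : 0 < 2)]

lemma qPoch_zero (q a : ℂ) : qPoch q a 0 = 1 := rfl

lemma qPoch_succ (q a : ℂ) (n : ℕ) : qPoch q a (n+1) = qPoch q a n * (1 - a * q ^ n) :=
  Finset.prod_range_succ _ _

lemma qPoch_shift (q a : ℂ) (n : ℕ) :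
    qPoch q a n * (1 - a * q ^ n) = (1 - a) * qPoch q (q * a) n := by
  rw [← qPoch_succ]
  unfold qPoch
  rw [Finset.prod_range_succ']
  simp only [pow_zero, mul_one]
  rw [mul_comm]
  congr 1
  exact Finset.prod_congr rfl fun k _ => by ring_nf

lemma qPoch_ne_zero (q a : ℂ) (n : ℕ) (h : ∀ k : ℕ, a * q ^ k ≠ 1) : qPoch q a n ≠ 0 :=
  Finset.prod_ne_zero_iff.2 fun k _ => sub_ne_zero.2 fun hh => (h k) (by rw [← hh])

lemma qPoch_q_ne_zero (q : ℂ) (hq : ‖q‖ < 1) (n : ℕ) : qPoch q q n ≠ 0 := by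
  refine qPoch_ne_zero q q n fun k hk => ?_
  have : ‖q * q ^ k‖ < 1 := by
    calc ‖q * q ^ k‖ = ‖q‖ * ‖q‖ ^ k := by
          simp [norm_mul, norm_pow]
    _ ≤ ‖q‖ * 1 := by
          refine mul_le_mul_of_nonneg_left (pow_le_one₀ (norm_nonneg q) hq.le) (norm_nonneg q)
    _ = ‖q‖ := mul_one _
    _ < 1 := hq
  simp [hk] at this

lemma phiTerm_succ (a1 a2 b1 b2 q t : ℂ) (n : ℕ) :
    phiTerm a1 a2 b1 b2 q t (n+1) = phiTerm a1 a2 b1 b2 q t n *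
      (((1 - a1*q^n) * (1 - a2*q^n)) / ((1 - b1*q^n) * (1 - b2*q^n) * (1 - q*q^n)) *
        (-1) * q^n * t) := by
  unfold phiTerm
  rw [qPoch_succ, qPoch_succ, qPoch_succ, qPoch_succ, qPoch_succ, tri, pow_add, pow_succ, pow_succ]
  simp only [div_eq_mul_inv, mul_inv]
  ring

lemma phiTerm_summable (a1 a2 b1 b2 q t : ℂ) (hq : ‖q‖ < 1) :
    Summable (phiTerm a1 a2 b1 b2 q t) := by
  apply summable_of_ratio_norm_eventually_le (r := 1/2) (by norm_num)
  have hq0 : Filter.Tendsto (fun n : ℕ => (q:ℂ)^n) Filter.atTop (nhds 0) :=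
    tendsto_pow_atTop_nhds_zero_of_norm_lt_one (by simpa using hq)
  set F : ℂ → ℂ := fun x => ((1 - a1*x) * (1 - a2*x)) / ((1 - b1*x) * (1 - b2*x) * (1 - q*x)) * (-1) * x * t with hF
  have hcont : ContinuousAt F 0 := by
    refine ContinuousAt.mul (ContinuousAt.mul (ContinuousAt.mul ?_ (by fun_prop)) (by fun_prop)) (by fun_prop)
    exact ContinuousAt.div (by fun_prop) (by fun_prop) (by norm_num)
  have hF0 : F 0 = 0 := by simp [hF]
  have htend : Filter.Tendsto (fun n : ℕ => ‖F (q^n)‖) Filter.atTop (nhds 0) := by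
    have := (hcont.tendsto.comp hq0)
    rw [hF0] at this
    simpa only [norm_zero, Function.comp_def] using ((continuous_norm (E := ℂ)).continuousAt.tendsto.comp this)
  have hev : ∀ᶠ n in Filter.atTop, ‖F (q^n)‖ < 1/2 := by
    exact htend.eventually_lt_const (by norm_num)
  filter_upwards [hev] with n hn
  rw [phiTerm_succ]
  have : phiTerm a1 a2 b1 b2 q t n * (((1 - a1*q^n) * (1 - a2*q^n)) / ((1 - b1*q^n) * (1 - b2*q^n) * (1 - q*q^n)) * (-1) * q^n * t) = phiTerm a1 a2 b1 b2 q t n * F (q^n) := by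
    simp only [hF]
  rw [this, norm_mul]
  calc ‖phiTerm a1 a2 b1 b2 q t n‖ * ‖F (q^n)‖ ≤ ‖phiTerm a1 a2 b1 b2 q t n‖ * (1/2) :=
        mul_le_mul_of_nonneg_left hn.le (norm_nonneg _)
  _ = 1/2 * ‖phiTerm a1 a2 b1 b2 q t n‖ := by ring



lemma phiTerm_t_mul (a b c d q u v : ℂ) (n : ℕ) :
    phiTerm a b c d q (u*v) n = phiTerm a b c d q u n * v^n := by
  unfold phiTerm; rw [mul_pow]; ring

lemma phiTerm_b1_shift (a b c d q u : ℂ) (n : ℕ) (h1 : 1 - c ≠ 0) (hc : 1 - c*q^n ≠ 0)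
    (hP' : qPoch q (q*c) n ≠ 0) :
    phiTerm a b c d q u n = phiTerm a b (q*c) d q u n * ((1 - c*q^n)/(1-c)) := by
  unfold phiTerm
  rw [show qPoch q c n = (1-c)*qPoch q (q*c) n/(1-c*q^n) from by
    rw [eq_div_iff hc]; exact qPoch_shift q c n]
  rw [div_eq_mul_inv, div_eq_mul_inv, div_eq_mul_inv, mul_inv, mul_inv, mul_inv, mul_inv,
    inv_inv]
  field_simp

lemma phiTerm_b2_shift (a b c d q u : ℂ) (n : ℕ) (h1 : 1 - d ≠ 0) (hc : 1 - d*q^n ≠ 0)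
    (hQ' : qPoch q (q*d) n ≠ 0) :
    phiTerm a b c d q u n = phiTerm a b c (q*d) q u n * ((1 - d*q^n)/(1-d)) := by
  unfold phiTerm
  rw [show qPoch q d n = (1-d)*qPoch q (q*d) n/(1-d*q^n) from by
    rw [eq_div_iff hc]; exact qPoch_shift q d n]
  rw [div_eq_mul_inv, div_eq_mul_inv, div_eq_mul_inv, mul_inv, mul_inv, mul_inv, mul_inv,
    inv_inv]
  field_simp

lemma phiTerm_a1_shift (a b c d q u : ℂ) (n : ℕ) :
    (1 - a) * phiTerm (q*a) b c d q u n = (1 - a*q^n) * phiTerm a b c d q u n := by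
  unfold phiTerm
  linear_combination (qPoch q b n / (qPoch q c n * qPoch q d n * qPoch q q n) * (-1)^n *
    q^(n*(n-1)/2) * u^n) * (qPoch_shift q a n).symm

lemma phiTerm_succ_mul (a b c d q u : ℂ) (n : ℕ) (hc : 1 - c*q^n ≠ 0) (hd : 1 - d*q^n ≠ 0)
    (hqx : 1 - q*q^n ≠ 0) :
    phiTerm a b c d q u (n+1) * ((1 - c*q^n)*(1 - d*q^n)*(1 - q*q^n)) =
    phiTerm a b c d q u n * ((1 - a*q^n)*(1 - b*q^n)) * (-1) * q^n * u := by
  rw [phiTerm_succ, div_eq_mul_inv]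
  have hD : ((1 - c*q^n)*(1 - d*q^n)*(1 - q*q^n)) * ((1 - c*q^n)*(1 - d*q^n)*(1 - q*q^n))⁻¹ = 1 :=
    mul_inv_cancel₀ (mul_ne_zero (mul_ne_zero hc hd) hqx)
  linear_combination (phiTerm a b c d q u n * ((1 - a*q^n)*(1 - b*q^n)) * (-1) * q^n * u) * hD

example (a b : ℂ) : -a * b = (-a) * b := rfl

lemma eq2_term (q a0 a1 a2 a3 t : ℂ) (n : ℕ)
    (h1a0 : 1 - a0 ≠ 0) (hx : 1 - a0 * q ^ n ≠ 0)
    (hP' : qPoch q (q*a0) n ≠ 0) :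
    (1-q)*a0/(1-a0) * phiTerm (a0*a1) (a0*a1*a2*a3) (q*a0) (a0*a1*a2) q (q*a0*t) n
    = (1-q)*a0 * phiTerm (a0*a1) (a0*a1*a2*a3) a0 (a0*a1*a2) q (q*a0*t) n
      + a0 * ((1-q)*a0/(1-a0) * phiTerm (a0*a1) (a0*a1*a2*a3) (q*a0) (a0*a1*a2) q (q^2*a0*t) n) := by
  rw [phiTerm_b1_shift (a0*a1) (a0*a1*a2*a3) a0 (a0*a1*a2) q (q*a0*t) n h1a0 hx hP']
  rw [show q^2*a0*t = q*a0*t*q by ring,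
    phiTerm_t_mul (a0*a1) (a0*a1*a2*a3) (q*a0) (a0*a1*a2) q (q*a0*t) q n]
  field_simp
  ring

set_option maxHeartbeats 2000000 in
lemma eq3_term (q a0 a1 a2 a3 t : ℂ) (n : ℕ)
    (h1a0 : 1 - a0 ≠ 0) (h1aaa : 1 - a0*a1*a2 ≠ 0)
    (hx : 1 - a0 * q ^ n ≠ 0) (hxaaa : 1 - a0*a1*a2*q^n ≠ 0)
    (hP' : qPoch q (q*a0) n ≠ 0) (hQ' : qPoch q (q*(a0*a1*a2)) n ≠ 0) :
    (1-q)*a0*(1-a0*a1)/((1-a0)*(1-a0*a1*a2)) *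
      phiTerm (q*a0*a1) (a0*a1*a2*a3) (q*a0) (q*a0*a1*a2) q (q*a0*t) n
    = (1-q)*a0 * phiTerm (a0*a1) (a0*a1*a2*a3) a0 (a0*a1*a2) q (q*a0*t) n
      + a0*(1-a1) * ((1-q)*a0/(1-a0) *
          phiTerm (a0*a1) (a0*a1*a2*a3) (q*a0) (a0*a1*a2) q (q^2*a0*t) n)
      + a0*a1*a2 * ((1-q)*a0*(1-a0*a1)/((1-a0)*(1-a0*a1*a2)) *
          phiTerm (q*a0*a1) (a0*a1*a2*a3) (q*a0) (q*a0*a1*a2) q (q^2*a0*t) n) := by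
  have hT0 : phiTerm (a0*a1) (a0*a1*a2*a3) a0 (a0*a1*a2) q (q*a0*t) n
      = phiTerm (a0*a1) (a0*a1*a2*a3) (q*a0) (q*(a0*a1*a2)) q (q*a0*t) n
        * ((1 - a0*a1*a2*q^n)/(1-(a0*a1*a2))) * ((1 - a0*q^n)/(1-a0)) := by
    rw [phiTerm_b1_shift (a0*a1) (a0*a1*a2*a3) a0 (a0*a1*a2) q (q*a0*t) n h1a0 hx hP',
      phiTerm_b2_shift (a0*a1) (a0*a1*a2*a3) (q*a0) (a0*a1*a2) q (q*a0*t) n h1aaa hxaaa hQ']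
  have hT1x : phiTerm (a0*a1) (a0*a1*a2*a3) (q*a0) (a0*a1*a2) q (q^2*a0*t) n
      = phiTerm (a0*a1) (a0*a1*a2*a3) (q*a0) (q*(a0*a1*a2)) q (q*a0*t) n
        * q^n * ((1 - a0*a1*a2*q^n)/(1-(a0*a1*a2))) := by
    rw [phiTerm_b2_shift (a0*a1) (a0*a1*a2*a3) (q*a0) (a0*a1*a2) q (q^2*a0*t) n h1aaa hxaaa hQ',
      show q^2*a0*t = q*a0*t*q by ring,
      phiTerm_t_mul (a0*a1) (a0*a1*a2*a3) (q*a0) (q*(a0*a1*a2)) q (q*a0*t) q n]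
  have hT2 : (1 - a0*a1) * phiTerm (q*a0*a1) (a0*a1*a2*a3) (q*a0) (q*a0*a1*a2) q (q*a0*t) n
      = (1 - a0*a1*q^n) *
        phiTerm (a0*a1) (a0*a1*a2*a3) (q*a0) (q*(a0*a1*a2)) q (q*a0*t) n := by
    rw [show q*a0*a1*a2 = q*(a0*a1*a2) by ring, show q*a0*a1 = q*(a0*a1) by ring]
    linear_combination phiTerm_a1_shift (a0*a1) (a0*a1*a2*a3) (q*a0) (q*(a0*a1*a2)) q (q*a0*t) n
  have hT2x : (1 - a0*a1) * phiTerm (q*a0*a1) (a0*a1*a2*a3) (q*a0) (q*a0*a1*a2) q (q^2*a0*t) n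
      = (1 - a0*a1*q^n) *
        (phiTerm (a0*a1) (a0*a1*a2*a3) (q*a0) (q*(a0*a1*a2)) q (q*a0*t) n * q^n) := by
    rw [show q*a0*a1*a2 = q*(a0*a1*a2) by ring, show q*a0*a1 = q*(a0*a1) by ring,
      show q^2*a0*t = q*a0*t*q by ring,
      phiTerm_t_mul (q*(a0*a1)) (a0*a1*a2*a3) (q*a0) (q*(a0*a1*a2)) q (q*a0*t) q n]
    linear_combination (q^n) * phiTerm_a1_shift (a0*a1) (a0*a1*a2*a3) (q*a0) (q*(a0*a1*a2)) q (q*a0*t) n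
  rw [hT0, hT1x]
  simp only [div_eq_mul_inv, mul_inv]
  generalize (1-a0)⁻¹ = j1
  generalize (1-a0*a1*a2)⁻¹ = j2
  linear_combination ((1-q)*a0*j1*j2) * hT2 - (a0*a1*a2*(1-q)*a0*j1*j2) * hT2x

set_option maxHeartbeats 1000000 in
set_option maxRecDepth 4000 in
lemma eq1_term (q a0 a1 a2 a3 t : ℂ) (n : ℕ)
    (h1a0 : 1 - a0 ≠ 0) (h1aaa : 1 - a0*a1*a2 ≠ 0) (h1q : 1 - q ≠ 0)
    (hx : 1 - a0 * q ^ n ≠ 0) (hxaaa : 1 - a0*a1*a2*q^n ≠ 0) (hxq : 1 - q*q^n ≠ 0)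
    (hP' : qPoch q (q*a0) n ≠ 0) (hQ' : qPoch q (q*(a0*a1*a2)) n ≠ 0) :
    phiTerm (a0*a1) (a0*a1*a2*a3) a0 (a0*a1*a2) q (a0*t) (n+1)
    = phiTerm (a0*a1) (a0*a1*a2*a3) a0 (a0*a1*a2) q (q*a0*t) (n+1)
      + t * (-a0 * phiTerm (a0*a1) (a0*a1*a2*a3) a0 (a0*a1*a2) q (q*a0*t) n
          - a0*(1-a1)/(1-q) * ((1-q)*a0/(1-a0) *
              phiTerm (a0*a1) (a0*a1*a2*a3) (q*a0) (a0*a1*a2) q (q^2*a0*t) n)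
          - a0*a1*a2*(1-a3)/(1-q) * ((1-q)*a0*(1-a0*a1)/((1-a0)*(1-a0*a1*a2)) *
              phiTerm (q*a0*a1) (a0*a1*a2*a3) (q*a0) (q*a0*a1*a2) q (q^2*a0*t) n)) := by
  have hfs := phiTerm_succ_mul (a0*a1) (a0*a1*a2*a3) a0 (a0*a1*a2) q (a0*t) n hx hxaaa hxq
  have hgs := phiTerm_succ_mul (a0*a1) (a0*a1*a2*a3) a0 (a0*a1*a2) q (q*a0*t) n hx hxaaa hxq
  have hf0 : phiTerm (a0*a1) (a0*a1*a2*a3) a0 (a0*a1*a2) q (a0*t) n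
      = phiTerm (a0*a1) (a0*a1*a2*a3) (q*a0) (q*(a0*a1*a2)) q (a0*t) n
        * ((1 - a0*a1*a2*q^n)/(1-(a0*a1*a2))) * ((1 - a0*q^n)/(1-a0)) := by
    rw [phiTerm_b1_shift (a0*a1) (a0*a1*a2*a3) a0 (a0*a1*a2) q (a0*t) n h1a0 hx hP',
      phiTerm_b2_shift (a0*a1) (a0*a1*a2*a3) (q*a0) (a0*a1*a2) q (a0*t) n h1aaa hxaaa hQ']
  have hg0 : phiTerm (a0*a1) (a0*a1*a2*a3) a0 (a0*a1*a2) q (q*a0*t) n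
      = phiTerm (a0*a1) (a0*a1*a2*a3) (q*a0) (q*(a0*a1*a2)) q (a0*t) n * q^n
        * ((1 - a0*a1*a2*q^n)/(1-(a0*a1*a2))) * ((1 - a0*q^n)/(1-a0)) := by
    rw [phiTerm_b1_shift (a0*a1) (a0*a1*a2*a3) a0 (a0*a1*a2) q (q*a0*t) n h1a0 hx hP',
      phiTerm_b2_shift (a0*a1) (a0*a1*a2*a3) (q*a0) (a0*a1*a2) q (q*a0*t) n h1aaa hxaaa hQ',
      show q*a0*t = a0*t*q by ring,
      phiTerm_t_mul (a0*a1) (a0*a1*a2*a3) (q*a0) (q*(a0*a1*a2)) q (a0*t) q n]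
  have hT1x : phiTerm (a0*a1) (a0*a1*a2*a3) (q*a0) (a0*a1*a2) q (q^2*a0*t) n
      = phiTerm (a0*a1) (a0*a1*a2*a3) (q*a0) (q*(a0*a1*a2)) q (a0*t) n * q^n * q^n
        * ((1 - a0*a1*a2*q^n)/(1-(a0*a1*a2))) := by
    rw [phiTerm_b2_shift (a0*a1) (a0*a1*a2*a3) (q*a0) (a0*a1*a2) q (q^2*a0*t) n h1aaa hxaaa hQ',
      show q^2*a0*t = a0*t*q*q by ring,
      phiTerm_t_mul (a0*a1) (a0*a1*a2*a3) (q*a0) (q*(a0*a1*a2)) q (a0*t*q) q n,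
      phiTerm_t_mul (a0*a1) (a0*a1*a2*a3) (q*a0) (q*(a0*a1*a2)) q (a0*t) q n]
  have hT2x : (1 - a0*a1) * phiTerm (q*a0*a1) (a0*a1*a2*a3) (q*a0) (q*a0*a1*a2) q (q^2*a0*t) n
      = (1 - a0*a1*q^n) *
        (phiTerm (a0*a1) (a0*a1*a2*a3) (q*a0) (q*(a0*a1*a2)) q (a0*t) n * q^n * q^n) := by
    rw [show q*a0*a1*a2 = q*(a0*a1*a2) by ring, show q*a0*a1 = q*(a0*a1) by ring,
      show q^2*a0*t = a0*t*q*q by ring,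
      phiTerm_t_mul (q*(a0*a1)) (a0*a1*a2*a3) (q*a0) (q*(a0*a1*a2)) q (a0*t*q) q n,
      phiTerm_t_mul (q*(a0*a1)) (a0*a1*a2*a3) (q*a0) (q*(a0*a1*a2)) q (a0*t) q n]
    linear_combination (q^n*q^n) *
      phiTerm_a1_shift (a0*a1) (a0*a1*a2*a3) (q*a0) (q*(a0*a1*a2)) q (a0*t) n
  rw [hf0] at hfs
  rw [hg0] at hgs
  apply mul_right_cancel₀ (b := (1 - a0*q^n)*(1 - a0*a1*a2*q^n)*(1 - q*q^n))
    (mul_ne_zero (mul_ne_zero hx hxaaa) hxq)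
  rw [hg0, hT1x, hfs]
  simp only [div_eq_mul_inv, mul_inv] at hgs ⊢
  have hjq : (1-q) * (1-q)⁻¹ = 1 := mul_inv_cancel₀ h1q
  revert hgs hT2x hjq
  generalize (1-a0)⁻¹ = j1
  generalize (1-a0*a1*a2)⁻¹ = j2
  generalize (1-q)⁻¹ = jq
  generalize phiTerm (a0*a1) (a0*a1*a2*a3) (q*a0) (q*(a0*a1*a2)) q (a0*t) n = G
  generalize phiTerm (q*a0*a1) (a0*a1*a2*a3) (q*a0) (q*a0*a1*a2) q (q^2*a0*t) n = T2
  generalize phiTerm (a0*a1) (a0*a1*a2*a3) a0 (a0*a1*a2) q (q*a0*t) (n+1) = g1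
  intro hT2x hgs hjq
  linear_combination -hgs
    + (t*((1 - a0*q^n)*(1 - a0*a1*a2*q^n)*(1 - q*q^n))*a0*a1*a2*(1-a3)*jq*(1-q)*a0*j1*j2) * hT2x
    + (t*((1 - a0*q^n)*(1 - a0*a1*a2*q^n)*(1 - q*q^n))*a0*
        (a0*(1-a1)*j1*(G*q^n*q^n)*(1-a0*a1*a2*q^n)*j2
          + a0*a1*a2*(1-a3)*j1*j2*(1-a0*a1*q^n)*(G*q^n*q^n))) * hjq

set_option maxHeartbeats 1000000 in
/-- The vector `x(t) = (x₀(t), x₁(t), x₂(t))ᵀ` built from `₂φ₂` series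
satisfies the linear `q`-difference system `x(q⁻¹t) = (A₀ + tA₁) x(t)` of the degenerate
`q`-Garnier system attached to the quiver `Q_11`, for every `t ∈ ℂ`. -/
theorem phi22_solves_Q11_linear_system (q a0 a1 a2 a3 : ℂ)
    (hq0 : 0 < ‖q‖) (hq1 : ‖q‖ < 1)
    (hres : ∀ m : ℕ, a0 * q ^ m ≠ 1 ∧ a0 * a1 * a2 * q ^ m ≠ 1) :
    ∀ t : ℂ,
      (W0 q a0 a1 a2 a3 (q⁻¹ * t) =
        W0 q a0 a1 a2 a3 t
          + t * (-a0 * W0 q a0 a1 a2 a3 t - a0 * (1 - a1) / (1 - q) * W1 q a0 a1 a2 a3 t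
              - a0 * a1 * a2 * (1 - a3) / (1 - q) * W2 q a0 a1 a2 a3 t)) ∧
      (W1 q a0 a1 a2 a3 (q⁻¹ * t) =
        (1 - q) * a0 * W0 q a0 a1 a2 a3 t + a0 * W1 q a0 a1 a2 a3 t) ∧
      (W2 q a0 a1 a2 a3 (q⁻¹ * t) =
        (1 - q) * a0 * W0 q a0 a1 a2 a3 t + a0 * (1 - a1) * W1 q a0 a1 a2 a3 t
          + a0 * a1 * a2 * W2 q a0 a1 a2 a3 t) := by
  intro t
  have hqne : q ≠ 0 := fun h => by simp [h] at hq0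
  have h1q : (1:ℂ) - q ≠ 0 := sub_ne_zero.2 fun h => by rw [← h] at hq1; simp at hq1
  have h1a0 : (1:ℂ) - a0 ≠ 0 := sub_ne_zero.2 (Ne.symm (by simpa using (hres 0).1))
  have h1aaa : (1:ℂ) - a0*a1*a2 ≠ 0 := sub_ne_zero.2 (Ne.symm (by simpa using (hres 0).2))
  have hx : ∀ n : ℕ, (1:ℂ) - a0*q^n ≠ 0 := fun n => sub_ne_zero.2 (Ne.symm ((hres n).1))
  have hxaaa : ∀ n : ℕ, (1:ℂ) - a0*a1*a2*q^n ≠ 0 :=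
    fun n => sub_ne_zero.2 (Ne.symm ((hres n).2))
  have hxq : ∀ n : ℕ, (1:ℂ) - q*q^n ≠ 0 := by
    intro n
    have h2 : ‖q*q^n‖ < 1 := by
      rw [show q*q^n = q^(n+1) by rw [pow_succ]; ring, norm_pow]
      exact pow_lt_one₀ (norm_nonneg q) hq1 n.succ_ne_zero
    exact sub_ne_zero.2 fun h => by rw [← h] at h2; simp at h2
  have hP' : ∀ n, qPoch q (q*a0) n ≠ 0 :=
    fun n => qPoch_ne_zero _ _ _ (fun k h => (hres (k+1)).1 (by rw [← h]; ring))
  have hQ' : ∀ n, qPoch q (q*(a0*a1*a2)) n ≠ 0 :=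
    fun n => qPoch_ne_zero _ _ _ (fun k h => (hres (k+1)).2 (by rw [← h]; ring))
  have harg0 : q*a0*(q⁻¹*t) = a0*t := by field_simp
  have harg12 : q^2*a0*(q⁻¹*t) = q*a0*t := by field_simp
  have S0 : Summable (phiTerm (a0*a1) (a0*a1*a2*a3) a0 (a0*a1*a2) q (q*a0*t)) :=
    phiTerm_summable _ _ _ _ _ _ hq1
  have SF : Summable (phiTerm (a0*a1) (a0*a1*a2*a3) a0 (a0*a1*a2) q (a0*t)) :=
    phiTerm_summable _ _ _ _ _ _ hq1
  have S1 : Summable (phiTerm (a0*a1) (a0*a1*a2*a3) (q*a0) (a0*a1*a2) q (q*a0*t)) :=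
    phiTerm_summable _ _ _ _ _ _ hq1
  have S1x : Summable (phiTerm (a0*a1) (a0*a1*a2*a3) (q*a0) (a0*a1*a2) q (q^2*a0*t)) :=
    phiTerm_summable _ _ _ _ _ _ hq1
  have S2 : Summable (phiTerm (q*a0*a1) (a0*a1*a2*a3) (q*a0) (q*a0*a1*a2) q (q*a0*t)) :=
    phiTerm_summable _ _ _ _ _ _ hq1
  have S2x : Summable (phiTerm (q*a0*a1) (a0*a1*a2*a3) (q*a0) (q*a0*a1*a2) q (q^2*a0*t)) :=
    phiTerm_summable _ _ _ _ _ _ hq1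
  refine ⟨?_, ?_, ?_⟩
  · -- equation 1
    simp only [W0, W1, W2, phi22_eq, harg0, harg12]
    set h : ℕ → ℂ := fun n => t * (-a0 * phiTerm (a0*a1) (a0*a1*a2*a3) a0 (a0*a1*a2) q (q*a0*t) n
      - a0*(1-a1)/(1-q) * ((1-q)*a0/(1-a0) *
          phiTerm (a0*a1) (a0*a1*a2*a3) (q*a0) (a0*a1*a2) q (q^2*a0*t) n)
      - a0*a1*a2*(1-a3)/(1-q) * ((1-q)*a0*(1-a0*a1)/((1-a0)*(1-a0*a1*a2)) *
          phiTerm (q*a0*a1) (a0*a1*a2*a3) (q*a0) (q*a0*a1*a2) q (q^2*a0*t) n)) with hdef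
    have Sh : Summable h := by
      apply Summable.mul_left
      exact ((S0.mul_left (-a0)).sub
        ((S1x.mul_left ((1-q)*a0/(1-a0))).mul_left (a0*(1-a1)/(1-q)))).sub
        ((S2x.mul_left ((1-q)*a0*(1-a0*a1)/((1-a0)*(1-a0*a1*a2)))).mul_left
          (a0*a1*a2*(1-a3)/(1-q)))
    calc ∑' n, phiTerm (a0*a1) (a0*a1*a2*a3) a0 (a0*a1*a2) q (a0*t) n
        = phiTerm (a0*a1) (a0*a1*a2*a3) a0 (a0*a1*a2) q (a0*t) 0
          + ∑' n, phiTerm (a0*a1) (a0*a1*a2*a3) a0 (a0*a1*a2) q (a0*t) (n+1) :=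
          Summable.tsum_eq_zero_add SF
      _ = phiTerm (a0*a1) (a0*a1*a2*a3) a0 (a0*a1*a2) q (q*a0*t) 0
          + ∑' n, (phiTerm (a0*a1) (a0*a1*a2*a3) a0 (a0*a1*a2) q (q*a0*t) (n+1) + h n) := by
          congr 1
          exact tsum_congr fun n => eq1_term q a0 a1 a2 a3 t n h1a0 h1aaa h1q
            (hx n) (hxaaa n) (hxq n) (hP' n) (hQ' n)
      _ = phiTerm (a0*a1) (a0*a1*a2*a3) a0 (a0*a1*a2) q (q*a0*t) 0
          + ((∑' n, phiTerm (a0*a1) (a0*a1*a2*a3) a0 (a0*a1*a2) q (q*a0*t) (n+1))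
            + ∑' n, h n) := by rw [Summable.tsum_add ((summable_nat_add_iff 1).2 S0) Sh]
      _ = (∑' n, phiTerm (a0*a1) (a0*a1*a2*a3) a0 (a0*a1*a2) q (q*a0*t) n) + ∑' n, h n := by
          rw [Summable.tsum_eq_zero_add S0]; ring
      _ = (∑' n, phiTerm (a0*a1) (a0*a1*a2*a3) a0 (a0*a1*a2) q (q*a0*t) n)
          + t * (-a0 * ∑' n, phiTerm (a0*a1) (a0*a1*a2*a3) a0 (a0*a1*a2) q (q*a0*t) n
            - a0*(1-a1)/(1-q) * ((1-q)*a0/(1-a0) *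
                ∑' n, phiTerm (a0*a1) (a0*a1*a2*a3) (q*a0) (a0*a1*a2) q (q^2*a0*t) n)
            - a0*a1*a2*(1-a3)/(1-q) * ((1-q)*a0*(1-a0*a1)/((1-a0)*(1-a0*a1*a2)) *
                ∑' n, phiTerm (q*a0*a1) (a0*a1*a2*a3) (q*a0) (q*a0*a1*a2) q (q^2*a0*t) n)) := by
          congr 1
          rw [hdef]
          rw [tsum_mul_left]
          congr 1
          rw [Summable.tsum_sub ((S0.mul_left (-a0)).sub
              ((S1x.mul_left ((1-q)*a0/(1-a0))).mul_left (a0*(1-a1)/(1-q))))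
              ((S2x.mul_left ((1-q)*a0*(1-a0*a1)/((1-a0)*(1-a0*a1*a2)))).mul_left
                (a0*a1*a2*(1-a3)/(1-q))),
            Summable.tsum_sub (S0.mul_left (-a0))
              ((S1x.mul_left ((1-q)*a0/(1-a0))).mul_left (a0*(1-a1)/(1-q))),
            tsum_mul_left, tsum_mul_left, tsum_mul_left, tsum_mul_left, tsum_mul_left]
  · -- equation 2
    simp only [W0, W1, phi22_eq, harg12]
    rw [← tsum_mul_left, ← tsum_mul_left,
      show a0 * ((1-q)*a0/(1-a0) *
          ∑' n, phiTerm (a0*a1) (a0*a1*a2*a3) (q*a0) (a0*a1*a2) q (q^2*a0*t) n)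
        = ∑' n, a0 * ((1-q)*a0/(1-a0) *
            phiTerm (a0*a1) (a0*a1*a2*a3) (q*a0) (a0*a1*a2) q (q^2*a0*t) n) from by
        rw [tsum_mul_left, tsum_mul_left],
      ← Summable.tsum_add (S0.mul_left ((1-q)*a0))
        ((S1x.mul_left ((1-q)*a0/(1-a0))).mul_left a0)]
    exact tsum_congr fun n => eq2_term q a0 a1 a2 a3 t n h1a0 (hx n) (hP' n)
  · -- equation 3
    simp only [W0, W1, W2, phi22_eq, harg12]
    rw [← tsum_mul_left, ← tsum_mul_left,
      show a0*(1-a1) * ((1-q)*a0/(1-a0) *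
          ∑' n, phiTerm (a0*a1) (a0*a1*a2*a3) (q*a0) (a0*a1*a2) q (q^2*a0*t) n)
        = ∑' n, a0*(1-a1) * ((1-q)*a0/(1-a0) *
            phiTerm (a0*a1) (a0*a1*a2*a3) (q*a0) (a0*a1*a2) q (q^2*a0*t) n) from by
        rw [tsum_mul_left, tsum_mul_left],
      show a0*a1*a2 * ((1-q)*a0*(1-a0*a1)/((1-a0)*(1-a0*a1*a2)) *
          ∑' n, phiTerm (q*a0*a1) (a0*a1*a2*a3) (q*a0) (q*a0*a1*a2) q (q^2*a0*t) n)
        = ∑' n, a0*a1*a2 * ((1-q)*a0*(1-a0*a1)/((1-a0)*(1-a0*a1*a2)) *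
            phiTerm (q*a0*a1) (a0*a1*a2*a3) (q*a0) (q*a0*a1*a2) q (q^2*a0*t) n) from by
        rw [tsum_mul_left, tsum_mul_left],
      ← Summable.tsum_add (S0.mul_left ((1-q)*a0))
        ((S1x.mul_left ((1-q)*a0/(1-a0))).mul_left (a0*(1-a1))),
      ← Summable.tsum_add ((S0.mul_left ((1-q)*a0)).add
          ((S1x.mul_left ((1-q)*a0/(1-a0))).mul_left (a0*(1-a1))))
        ((S2x.mul_left ((1-q)*a0*(1-a0*a1)/((1-a0)*(1-a0*a1*a2)))).mul_left (a0*a1*a2))]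
    exact tsum_congr fun n => eq3_term q a0 a1 a2 a3 t n h1a0 h1aaa (hx n) (hxaaa n)
      (hP' n) (hQ' n)
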